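/- (Empty cores exist for general QIVPMs) On ℂ³ with standard basis vectors e₀, e₁, e₂, let Q₀ be the orthogonal projection matrix onto the span of e₀, Q₊ the orthogonal projection onto the span of (e₀ + e₁)/√2, and Q₊' the orthogonal projection onto the span of (e₀ + e₂)/√2. Then there is no state ρ on ℂ³ with Re (Matrix.trace (ρ * Q₀)) = 0, Re (Matrix.trace (ρ * Q₊)) = 0, and Re (Matrix.trace (ρ * Q₊')) = 0. Consequently, the QIVPM on ℂ³ that assigns the interval [0,0] to 0, Q₀, Q₊, Q₊', the interval [1,1] to their complements and the identity, and [0,1] to all other projectors, has empty core: no state is consistent with it at every projector. -/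

import Mathlib

open Matrix
open scoped ComplexOrder

/-- A projector on `ℂ^d`: an idempotent, self-adjoint matrix. -/
def IsProjector {d : ℕ} (P : Matrix (Fin d) (Fin d) ℂ) : Prop :=
  P * P = P ∧ Pᴴ = P

/-- A quantum interval-valued probability measure (QIVPM) on `ℂ^d`,
given by the pair of interval-endpoint functions `L ≤ R`. -/
def IsQIVPM {d : ℕ} (L R : Matrix (Fin d) (Fin d) ℂ → ℝ) : Prop :=
  (∀ P, IsProjector P → 0 ≤ L P ∧ L P ≤ R P ∧ R P ≤ 1) ∧
  (L 0 = 0 ∧ R 0 = 0) ∧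
  (L 1 = 1 ∧ R 1 = 1) ∧
  (∀ P, IsProjector P → L (1 - P) = 1 - R P ∧ R (1 - P) = 1 - L P) ∧
  (∀ P₀ P₁, IsProjector P₀ → IsProjector P₁ → P₀ * P₁ = P₁ * P₀ →
    L P₀ + L P₁ ≤ L (P₀ + P₁ - P₀ * P₁) + L (P₀ * P₁) ∧
    R (P₀ + P₁ - P₀ * P₁) + R (P₀ * P₁) ≤ R P₀ + R P₁)

/-- A QIVPM is `δ`-deterministic if every projector's interval lies in `[0,δ]` or `[1-δ,1]`. -/
def IsDeltaDet {d : ℕ} (δ : ℝ) (L R : Matrix (Fin d) (Fin d) ℂ → ℝ) : Prop :=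
  ∀ P, IsProjector P → R P ≤ δ ∨ 1 - δ ≤ L P

/-- A QIVPM is `0`-deterministic if every projector is assigned `[0,0]` or `[1,1]`. -/
def IsZeroDet {d : ℕ} (L R : Matrix (Fin d) (Fin d) ℂ → ℝ) : Prop :=
  ∀ P, IsProjector P → (L P = 0 ∧ R P = 0) ∨ (L P = 1 ∧ R P = 1)

/-- A state (density matrix) on `ℂ^d`. -/
def IsState {d : ℕ} (ρ : Matrix (Fin d) (Fin d) ℂ) : Prop :=
  ρ.PosSemidef ∧ ρ.trace = 1

/-- Orthogonal projection onto the span of `e₀`. -/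
noncomputable def Q0 : Matrix (Fin 3) (Fin 3) ℂ := !![1, 0, 0; 0, 0, 0; 0, 0, 0]

/-- Orthogonal projection onto the span of `(e₀ + e₁)/√2`. -/
noncomputable def Qplus : Matrix (Fin 3) (Fin 3) ℂ := !![1/2, 1/2, 0; 1/2, 1/2, 0; 0, 0, 0]

/-- Orthogonal projection onto the span of `(e₀ + e₂)/√2`. -/
noncomputable def Qplus' : Matrix (Fin 3) (Fin 3) ℂ := !![1/2, 0, 1/2; 0, 0, 0; 1/2, 0, 1/2]

open Classical in
/-- Left endpoint: `0` on `{0, Q0, Q₊, Q₊'}`, `1` on their complements and `1`, else `0`. -/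
noncomputable def L8 : Matrix (Fin 3) (Fin 3) ℂ → ℝ := fun P =>
  if P = 0 ∨ P = Q0 ∨ P = Qplus ∨ P = Qplus' then 0
  else if P = 1 ∨ P = 1 - Q0 ∨ P = 1 - Qplus ∨ P = 1 - Qplus' then 1
  else 0

open Classical in
/-- Right endpoint: `0` on `{0, Q0, Q₊, Q₊'}`, `1` on their complements and `1`, else `1`. -/
noncomputable def R8 : Matrix (Fin 3) (Fin 3) ℂ → ℝ := fun P =>
  if P = 0 ∨ P = Q0 ∨ P = Qplus ∨ P = Qplus' then 0
  else if P = 1 ∨ P = 1 - Q0 ∨ P = 1 - Qplus ∨ P = 1 - Qplus' then 1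
  else 1

set_option maxHeartbeats 1000000 in
private lemma six_sq' {a b c d e f : ℝ} (h : a*a + b*b + (c*c + d*d) + (e*e + f*f) = 0) :
    a = 0 ∧ b = 0 ∧ c = 0 ∧ d = 0 ∧ e = 0 ∧ f = 0 := by
  refine ⟨?_, ?_, ?_, ?_, ?_, ?_⟩ <;>
    nlinarith [mul_self_nonneg a, mul_self_nonneg b, mul_self_nonneg c, mul_self_nonneg d,
      mul_self_nonneg e, mul_self_nonneg f]

set_option maxHeartbeats 1000000 in
private lemma no_state' : ¬ ∃ ρ : Matrix (Fin 3) (Fin 3) ℂ, IsState ρ ∧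
        (Matrix.trace (ρ * Q0)).re = 0 ∧ (Matrix.trace (ρ * Qplus)).re = 0 ∧
        (Matrix.trace (ρ * Qplus')).re = 0 := by
  rintro ⟨ρ, ⟨hpsd, htr⟩, h0, h1, h2⟩
  obtain ⟨A, rfl⟩ : ∃ A : Matrix (Fin 3) (Fin 3) ℂ, ρ = Aᴴ * A := by
    open scoped MatrixOrder in exact CStarAlgebra.nonneg_iff_eq_star_mul_self.mp hpsd.nonneg
  simp [Matrix.trace, Matrix.mul_apply, Fin.sum_univ_three, Q0, Qplus, Qplus',
    Matrix.conjTranspose_apply, Matrix.diag, Matrix.cons_val_zero, Matrix.cons_val_one,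
    Matrix.head_cons, Matrix.cons_val_two, Matrix.tail_cons, Matrix.head_fin_const,
    Matrix.vecHead, Matrix.vecTail, Complex.ext_iff] at h0 h1 h2 htr
  obtain ⟨htr, -⟩ := htr
  obtain ⟨e1, e2, e3, e4, e5, e6⟩ := six_sq' h0
  rw [e1, e2, e3, e4, e5, e6] at h1 h2 htr
  ring_nf at h1 h2 htr
  linarith [h1, h2, htr]

set_option maxHeartbeats 1000000 in
private lemma projQ0 : IsProjector Q0 := by
  constructor
  · ext i j
    fin_cases i <;> fin_cases j <;>
      simp [Q0, Matrix.mul_apply, Fin.sum_univ_three, Matrix.vecHead, Matrix.vecTail]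
  · ext i j
    fin_cases i <;> fin_cases j <;>
      simp [Q0, Matrix.conjTranspose_apply, Matrix.vecHead, Matrix.vecTail]

set_option maxHeartbeats 1000000 in
private lemma projQplus : IsProjector Qplus := by
  constructor
  · ext i j
    fin_cases i <;> fin_cases j <;>
      · simp [Qplus, Matrix.mul_apply, Fin.sum_univ_three, Matrix.vecHead, Matrix.vecTail]
        try norm_num
  · ext i j
    fin_cases i <;> fin_cases j <;>
      · simp [Qplus, Matrix.conjTranspose_apply, Matrix.vecHead, Matrix.vecTail]
        try norm_num

set_option maxHeartbeats 1000000 in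
private lemma projQplus' : IsProjector Qplus' := by
  constructor
  · ext i j
    fin_cases i <;> fin_cases j <;>
      · simp [Qplus', Matrix.mul_apply, Fin.sum_univ_three, Matrix.vecHead, Matrix.vecTail]
        try norm_num
  · ext i j
    fin_cases i <;> fin_cases j <;>
      · simp [Qplus', Matrix.conjTranspose_apply, Matrix.vecHead, Matrix.vecTail]
        try norm_num

/-- Empty cores exist for general QIVPMs: no state annihilates `Q0`, `Q₊`, `Q₊'`
simultaneously, hence the QIVPM `(L8, R8)` has an empty core. -/

theorem empty_core_exists :
    (¬ ∃ ρ : Matrix (Fin 3) (Fin 3) ℂ, IsState ρ ∧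
        (Matrix.trace (ρ * Q0)).re = 0 ∧ (Matrix.trace (ρ * Qplus)).re = 0 ∧
        (Matrix.trace (ρ * Qplus')).re = 0) ∧
    ¬ ∃ ρ : Matrix (Fin 3) (Fin 3) ℂ, IsState ρ ∧
        ∀ P, IsProjector P →
          L8 P ≤ (Matrix.trace (ρ * P)).re ∧ (Matrix.trace (ρ * P)).re ≤ R8 P := by
  have key := no_state'
  refine ⟨key, ?_⟩
  rintro ⟨ρ, hρ, hcons⟩
  have z : ∀ Q : Matrix (Fin 3) (Fin 3) ℂ, IsProjector Q →
      (Q = 0 ∨ Q = Q0 ∨ Q = Qplus ∨ Q = Qplus') → (Matrix.trace (ρ * Q)).re = 0 := by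
    intro Q hQ hmem
    have h := hcons Q hQ
    have hL : L8 Q = 0 := by simp [L8, hmem]
    have hR : R8 Q = 0 := by simp [R8, hmem]
    rw [hL] at h
    rw [hR] at h
    linarith [h.1, h.2]
  exact key ⟨ρ, hρ, z Q0 projQ0 (Or.inr (Or.inl rfl)),
    z Qplus projQplus (Or.inr (Or.inr (Or.inl rfl))),
    z Qplus' projQplus' (Or.inr (Or.inr (Or.inr rfl)))⟩
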